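/- For every real number z > 0 that is not an integer, with n = ⌊z⌋, one has Γ(−z) = −(1/z) · ∫₀^∞ (e^{−x} − e_{n−1}(−x)) · x^{−z} dx, where Γ(−z) denotes the value at −z of the Gamma function analytically continued to negative non-integer arguments. -/

import Mathlib

open MeasureTheory Real Filter Set Topology

/-- Truncated exponential polynomial `e_n(x) = ∑_{k=0}^{n} x^k / k!`.
Note that `e_{n-1}(x)` corresponds to `∑ k in Finset.range n, x^k / k!`. -/
noncomputable def truncExpPrev (n : ℕ) (x : ℝ) : ℝ :=
  ∑ k ∈ Finset.range n, x ^ k / (k.factorial : ℝ)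

lemma truncExpPrev_zero' (x : ℝ) : truncExpPrev 0 x = 0 := by simp [truncExpPrev]

lemma truncExpPrev_at_zero (n : ℕ) : truncExpPrev (n + 1) 0 = 1 := by
  induction n with
  | zero => simp [truncExpPrev]
  | succ m ih =>
      rw [truncExpPrev, Finset.sum_range_succ, ← truncExpPrev, ih]
      simp

lemma truncExp_bound {n : ℕ} {x : ℝ} (hx0 : 0 ≤ x) (hx1 : x ≤ 1) :
    |Real.exp (-x) - truncExpPrev n (-x)| ≤ 2 * x ^ n := by
  rcases Nat.eq_zero_or_pos n with rfl | hn
  · rw [truncExpPrev_zero']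
    simp only [sub_zero, pow_zero, mul_one]
    rw [abs_of_nonneg (Real.exp_pos _).le]
    calc Real.exp (-x) ≤ Real.exp 0 := Real.exp_le_exp.2 (by linarith)
      _ ≤ 2 := by rw [Real.exp_zero]; norm_num
  · have h := Real.exp_bound (x := -x) (by rw [abs_neg, abs_of_nonneg hx0]; exact hx1) hn
    have hax : |(-x)| ^ n = x ^ n := by rw [abs_neg, abs_of_nonneg hx0]
    rw [hax] at h
    refine h.trans ?_
    rw [mul_comm 2 (x ^ n)]
    refine mul_le_mul_of_nonneg_left ?_ (pow_nonneg hx0 n)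
    have h1 : (1:ℝ) ≤ n.factorial := by exact_mod_cast n.factorial_pos
    have h2 : (1:ℝ) ≤ n := by exact_mod_cast hn
    rw [div_le_iff₀ (by positivity)]
    push_cast
    nlinarith

-- derivative of the truncated exponential
lemma hasDerivAt_truncExpPrev (n : ℕ) (y : ℝ) :
    HasDerivAt (truncExpPrev (n + 1)) (truncExpPrev n y) y := by
  have : HasDerivAt (truncExpPrev (n + 1))
      (∑ k ∈ Finset.range (n + 1), (k : ℝ) * y ^ (k - 1) / k.factorial) y := by
    apply HasDerivAt.fun_sum
    intro k _
    exact (hasDerivAt_pow k y).div_const _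
  convert this using 1
  rw [Finset.sum_range_succ' (fun k => (k : ℝ) * y ^ (k - 1) / k.factorial)]
  simp only [Nat.cast_zero, zero_mul, Nat.factorial_zero, Nat.cast_one, zero_div, add_zero]
  rw [truncExpPrev]
  apply Finset.sum_congr rfl
  intro i _
  have : ((i + 1).factorial : ℝ) = (i + 1) * i.factorial := by
    rw [Nat.factorial_succ]; push_cast; ring
  rw [this]
  push_cast
  field_simp

lemma contOn_cs (n : ℕ) (t : ℝ) (s : Set ℝ) (hs : ∀ x ∈ s, x ≠ 0) :
    ContinuousOn (fun x => (Real.exp (-x) - truncExpPrev n (-x)) * x ^ (t - 1)) s := by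
  apply ContinuousOn.mul
  · apply Continuous.continuousOn
    apply Continuous.sub (Real.continuous_exp.comp continuous_neg)
    apply continuous_finset_sum
    intro k _
    exact ((continuous_pow k).comp continuous_neg).div_const _
  · intro x hx
    exact (Real.continuousAt_rpow_const x _ (Or.inl (hs x hx))).continuousWithinAt

lemma cs_integrable (n : ℕ) {t : ℝ} (h1 : 0 < t + n) (h2 : t + n < 1) :
    IntegrableOn (fun x => (Real.exp (-x) - truncExpPrev n (-x)) * x ^ (t - 1)) (Ioi 0) := by
  rw [← Ioc_union_Ioi_eq_Ioi (zero_le_one : (0:ℝ) ≤ 1)]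
  apply IntegrableOn.union
  · -- on Ioc 0 1
    have hg : IntegrableOn (fun x : ℝ => 2 * x ^ (t + n - 1)) (Ioc (0:ℝ) 1) := by
      have := (intervalIntegral.intervalIntegrable_rpow' (a := 0) (b := 1)
        (r := t + n - 1) (by linarith)).1
      exact this.const_mul 2
    refine Integrable.mono' hg ?_ ?_
    · exact (contOn_cs n t _ (fun x hx => ne_of_gt hx.1)).aestronglyMeasurable measurableSet_Ioc
    · rw [ae_restrict_iff' measurableSet_Ioc]
      filter_upwards with x hx
      have hx0 : 0 < x := hx.1
      rw [norm_mul, Real.norm_rpow_of_nonneg hx0.le, Real.norm_eq_abs, Real.norm_eq_abs,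
        abs_of_nonneg hx0.le]
      calc |Real.exp (-x) - truncExpPrev n (-x)| * x ^ (t - 1)
          ≤ (2 * x ^ n) * x ^ (t - 1) := by
            apply mul_le_mul_of_nonneg_right (truncExp_bound hx0.le hx.2)
            exact Real.rpow_nonneg hx0.le _
        _ = 2 * x ^ (t + ↑n - 1) := by
            rw [mul_assoc, ← Real.rpow_natCast x n, ← Real.rpow_add hx0]
            ring_nf
  · -- on Ioi 1
    have key : IntegrableOn (fun x : ℝ => Real.exp (-x) * x ^ (t - 1)
        - ∑ k ∈ Finset.range n, ((-1 : ℝ) ^ k / k.factorial) * x ^ ((k : ℝ) + t - 1))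
        (Ioi (1:ℝ)) := by
      apply Integrable.sub
      · -- exp(-x) x^(t-1) on Ioi 1
        refine Integrable.mono' ((exp_neg_integrableOn_Ioi 1 (zero_lt_one)).congr_fun
          (fun x _ => by show rexp (-1 * x) = rexp (-x); rw [neg_one_mul]) measurableSet_Ioi) ?_ ?_
        · refine ContinuousOn.aestronglyMeasurable ?_ measurableSet_Ioi
          apply ContinuousOn.mul (Real.continuous_exp.comp continuous_neg).continuousOn
          intro x hx
          exact (Real.continuousAt_rpow_const x _
            (Or.inl (lt_trans zero_lt_one hx).ne')).continuousWithinAt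
        · rw [ae_restrict_iff' measurableSet_Ioi]
          filter_upwards with x hx
          have hx0 : (0:ℝ) < x := lt_trans zero_lt_one hx
          rw [norm_mul, Real.norm_eq_abs, Real.norm_rpow_of_nonneg hx0.le,
            Real.norm_eq_abs, abs_of_nonneg hx0.le, abs_of_nonneg (Real.exp_pos _).le]
          have hn0 : (0:ℝ) ≤ n := Nat.cast_nonneg n
          calc Real.exp (-x) * x ^ (t - 1)
              ≤ Real.exp (-x) * 1 := by
                refine mul_le_mul_of_nonneg_left ?_ (Real.exp_pos _).le
                exact Real.rpow_le_one_of_one_le_of_nonpos hx.le (by linarith)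
            _ = Real.exp (-x) := mul_one _
      · apply integrable_finset_sum
        intro k hk
        apply Integrable.const_mul
        apply integrableOn_Ioi_rpow_of_lt _ zero_lt_one
        have : (k : ℝ) ≤ n - 1 := by
          have := Finset.mem_range.1 hk
          have : (k:ℝ) + 1 ≤ n := by exact_mod_cast this
          linarith
        linarith
    refine (key.congr_fun ?_ measurableSet_Ioi)
    intro x hx
    have hx0 : (0:ℝ) < x := lt_trans zero_lt_one hx
    simp only [truncExpPrev]
    rw [sub_mul, Finset.sum_mul]
    congr 1
    apply Finset.sum_congr rfl
    intro k _
    have hpow : (x:ℝ) ^ (k:ℝ) * x ^ (t - 1) = x ^ ((k:ℝ) + t - 1) := by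
      rw [← Real.rpow_add hx0]; ring_nf
    rw [show ((-x):ℝ) ^ k = (-1:ℝ) ^ k * x ^ k from neg_pow x k,
      ← Real.rpow_natCast x k, ← hpow]
    ring

lemma cs_main (n : ℕ) : ∀ s : ℝ, 0 < s + n → s + n < 1 →
    Real.Gamma s = ∫ x in Ioi (0:ℝ), (Real.exp (-x) - truncExpPrev n (-x)) * x ^ (s - 1) := by
  induction n with
  | zero =>
      intro s h1 h2
      simp only [Nat.cast_zero, add_zero] at h1 h2
      rw [Real.Gamma_eq_integral h1]
      simp [truncExpPrev]
  | succ n ih =>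
      intro s h1 h2
      have hn0 : (0:ℝ) ≤ n := Nat.cast_nonneg n
      push_cast at h1 h2
      have hs_neg : s < 0 := by linarith
      have hs_ne : s ≠ 0 := hs_neg.ne
      have hih := ih (s + 1) (by push_cast; linarith) (by push_cast; linarith)
      have int1 : IntegrableOn
          (fun x => (Real.exp (-x) - truncExpPrev (n+1) (-x)) * x ^ (s - 1)) (Ioi (0:ℝ)) :=
        cs_integrable (n+1) (by push_cast; linarith) (by push_cast; linarith)
      have int2 : IntegrableOn
          (fun x => (Real.exp (-x) - truncExpPrev n (-x)) * x ^ s) (Ioi (0:ℝ)) := by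
        have := cs_integrable n (t := s + 1) (by push_cast; linarith) (by push_cast; linarith)
        simpa using this
      -- FTC on (0, ∞)
      have key : (∫ x in Ioi (0:ℝ),
          ((Real.exp (-x) - truncExpPrev (n+1) (-x)) * x ^ (s - 1)
            - (1/s) * ((Real.exp (-x) - truncExpPrev n (-x)) * x ^ s))) = 0 := by
        have hcont : ContinuousWithinAt
            (fun x => (1/s) * ((Real.exp (-x) - truncExpPrev (n+1) (-x)) * x ^ s))
            (Ici (0:ℝ)) 0 := by
          have hpos : 0 < s + (↑n + 1) := h1
          have hG0 : (1/s) * ((Real.exp (-(0:ℝ)) - truncExpPrev (n+1) (-(0:ℝ))) * (0:ℝ) ^ s)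
              = 0 := by
            rw [neg_zero, Real.exp_zero, truncExpPrev_at_zero]; simp
          have hb : Tendsto (fun x : ℝ => |1/s| * (2 * x ^ (s + (↑n + 1))))
              (𝓝[Ici (0:ℝ)] 0) (𝓝 0) := by
            have h0 : ContinuousAt (fun x : ℝ => x ^ (s + (↑n + 1))) 0 :=
              Real.continuousAt_rpow_const 0 _ (Or.inr hpos.le)
            have h0' := (h0.continuousWithinAt (s := Ici (0:ℝ))).tendsto
            rw [Real.zero_rpow (ne_of_gt hpos)] at h0'
            have := (h0'.const_mul (2:ℝ)).const_mul (|1/s|)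
            simpa using this
          have hsq : Tendsto
              (fun x => (1/s) * ((Real.exp (-x) - truncExpPrev (n+1) (-x)) * x ^ s))
              (𝓝[Ici (0:ℝ)] 0) (𝓝 0) := by
            apply squeeze_zero_norm' ?_ hb
            filter_upwards [Icc_mem_nhdsGE_of_mem (Set.mem_Ico.2 ⟨le_refl (0:ℝ), zero_lt_one⟩)]
              with x hx
            rcases eq_or_lt_of_le hx.1 with h0 | h0
            · rw [← h0]
              simp [Real.exp_zero, truncExpPrev_at_zero, Real.zero_rpow (ne_of_gt hpos),
                abs_nonneg]
            · rw [norm_mul, norm_mul, Real.norm_rpow_of_nonneg h0.le, Real.norm_eq_abs,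
                Real.norm_eq_abs, Real.norm_eq_abs, abs_of_nonneg h0.le]
              have hb1 := truncExp_bound (n := n+1) h0.le hx.2
              have hxx : x ^ (n+1 : ℕ) * x ^ s = x ^ (s + (↑n + 1)) := by
                rw [← Real.rpow_natCast x (n+1), ← Real.rpow_add h0]
                push_cast; ring_nf
              calc |1/s| * (|Real.exp (-x) - truncExpPrev (n+1) (-x)| * x ^ s)
                  ≤ |1/s| * ((2 * x ^ (n+1 : ℕ)) * x ^ s) := by
                    refine mul_le_mul_of_nonneg_left ?_ (abs_nonneg _)
                    exact mul_le_mul_of_nonneg_right hb1 (Real.rpow_nonneg h0.le _)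
                _ = |1/s| * (2 * x ^ (s + (↑n + 1))) := by rw [mul_assoc, hxx]
          unfold ContinuousWithinAt
          simp only [neg_zero, Real.exp_zero, truncExpPrev_at_zero, sub_self, zero_mul,
            mul_zero]
          exact hsq
        have hderiv : ∀ x ∈ Ioi (0:ℝ), HasDerivAt
            (fun x => (1/s) * ((Real.exp (-x) - truncExpPrev (n+1) (-x)) * x ^ s))
            ((Real.exp (-x) - truncExpPrev (n+1) (-x)) * x ^ (s - 1)
              - (1/s) * ((Real.exp (-x) - truncExpPrev n (-x)) * x ^ s)) x := by
          intro x hx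
          have hfx : HasDerivAt (fun y => Real.exp (-y) - truncExpPrev (n+1) (-y))
              (-(Real.exp (-x) - truncExpPrev n (-x))) x := by
            have he : HasDerivAt (fun y : ℝ => Real.exp (-y)) (Real.exp (-x) * (-1)) x :=
              (Real.hasDerivAt_exp (-x)).comp x (hasDerivAt_neg x)
            have ht : HasDerivAt (fun y : ℝ => truncExpPrev (n+1) (-y))
                (truncExpPrev n (-x) * (-1)) x :=
              (hasDerivAt_truncExpPrev n (-x)).comp x (hasDerivAt_neg x)
            exact (he.sub ht).congr_deriv (by ring)
          have hrp : HasDerivAt (fun y : ℝ => y ^ s) (s * x ^ (s-1)) x :=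
            Real.hasDerivAt_rpow_const (Or.inl (ne_of_gt hx))
          have hmul := (hfx.mul hrp).const_mul (1/s)
          refine hmul.congr_deriv ?_
          have hxs : x ^ s = x ^ (s - 1) * x := by
            rw [← Real.rpow_add_one (ne_of_gt hx)]; ring_nf
          field_simp
          ring
        have hint : IntegrableOn
            (fun x => (Real.exp (-x) - truncExpPrev (n+1) (-x)) * x ^ (s - 1)
              - (1/s) * ((Real.exp (-x) - truncExpPrev n (-x)) * x ^ s)) (Ioi (0:ℝ)) :=
          int1.sub (int2.const_mul _)
        have htop : Tendsto
            (fun x => (1/s) * ((Real.exp (-x) - truncExpPrev (n+1) (-x)) * x ^ s))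
            atTop (𝓝 0) := by
          have T1 : Tendsto (fun x : ℝ => Real.exp (-x) * x ^ s) atTop (𝓝 0) := by
            have h := tendsto_rpow_mul_exp_neg_mul_atTop_nhds_zero s 1 zero_lt_one
            refine h.congr (fun x => ?_)
            rw [neg_one_mul, mul_comm]
          have T2 : ∀ k ∈ Finset.range (n+1),
              Tendsto (fun x : ℝ => ((-x) ^ k / (k.factorial : ℝ)) * x ^ s) atTop (𝓝 0) := by
            intro k hk
            have hk' : (k:ℝ) ≤ n := by
              have := Nat.lt_succ_iff.1 (Finset.mem_range.1 hk); exact_mod_cast this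
            have hneg : 0 < -((k:ℝ) + s) := by linarith
            have h3 := tendsto_rpow_neg_atTop hneg
            rw [neg_neg] at h3
            have h4 := h3.const_mul ((-1:ℝ)^k / (k.factorial : ℝ))
            rw [mul_zero] at h4
            apply h4.congr'
            filter_upwards [Ioi_mem_atTop (0:ℝ)] with x hx
            have hx0 : (0:ℝ) < x := hx
            have hpow : (x:ℝ) ^ (k:ℝ) * x ^ s = x ^ ((k:ℝ) + s) := by
              rw [← Real.rpow_add hx0]
            rw [show ((-x):ℝ) ^ k = (-1:ℝ) ^ k * x ^ k from neg_pow x k,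
              ← Real.rpow_natCast x k, ← hpow]
            ring
          have Tsum : Tendsto
              (fun x : ℝ => ∑ k ∈ Finset.range (n+1), ((-x) ^ k / (k.factorial : ℝ)) * x ^ s)
              atTop (𝓝 0) := by
            have := tendsto_finset_sum (Finset.range (n+1)) T2
            simpa using this
          have Tfin := (T1.sub Tsum).const_mul (1/s)
          rw [sub_zero, mul_zero] at Tfin
          refine Tfin.congr (fun x => ?_)
          simp only [truncExpPrev, sub_mul, Finset.sum_mul]
        have := integral_Ioi_of_hasDerivAt_of_tendsto hcont hderiv hint htop
        rw [this]
        rw [neg_zero, Real.exp_zero, truncExpPrev_at_zero]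
        simp
      rw [integral_sub int1 (int2.const_mul _), integral_const_mul, sub_eq_zero] at key
      have hGamma : Real.Gamma s = (1/s) * Real.Gamma (s+1) := by
        rw [Real.Gamma_add_one hs_ne]; field_simp
      have hexp : s + 1 - 1 = s := by ring
      rw [hexp] at hih
      rw [hGamma, hih, key]

/-- Gamma at negative non-integer arguments: for non-integer `z > 0` with `n = ⌊z⌋`,
`Γ(-z) = -(1/z) ∫₀^∞ (e^{-x} - e_{n-1}(-x)) x^{-z}`. -/
theorem Gamma_neg_integral_rep (z : ℝ) (hz : 0 < z) (hnint : ∀ m : ℤ, z ≠ (m : ℝ)) :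
    Real.Gamma (-z) = -(1 / z) *
      ∫ x in Set.Ioi (0 : ℝ), (Real.exp (-x) - truncExpPrev ⌊z⌋₊ (-x)) * x ^ (-z) := by
  set n := ⌊z⌋₊ with hn
  have h1 : (n:ℝ) ≤ z := Nat.floor_le hz.le
  have h2 : z < n + 1 := Nat.lt_floor_add_one z
  have h3 : (n:ℝ) ≠ z := by
    intro h
    exact hnint n (by exact_mod_cast h.symm)
  have hmain := cs_main n (1 - z) (by linarith) (by linarith [lt_of_le_of_ne h1 h3])
  have hexp : (1 - z) - 1 = -z := by ring
  rw [hexp] at hmain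
  rw [← hmain]
  have hz_ne : -z ≠ 0 := neg_ne_zero.2 hz.ne'
  have hadd : Real.Gamma (-z + 1) = -z * Real.Gamma (-z) := Real.Gamma_add_one hz_ne
  have h1z : (-z) + 1 = 1 - z := by ring
  rw [h1z] at hadd
  rw [hadd]
  field_simp
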